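/- arXiv:1204.5125 — 3 statements merged into one kernel-verified Lean document; each statement's English description precedes it below -/
import Mathlib

section
/- Let e_1, ..., e_n with n = d(d+1)/2 be the edge vectors of a nondegenerate d-dimensional simplex in R^d. Then the symmetric rank-one matrices e_i e_i^T, i = 1, ..., n, form a basis of the real vector space of symmetric d×d matrices. -/
open Matrix Finset

private lemma vmv_neg {d : ℕ} (u : Fin d → ℝ) : vecMulVec (-u) (-u) = vecMulVec u u := by
  ext a b; simp [vecMulVec_apply]

private lemma vmv_symm_id {d : ℕ} (u w : Fin d → ℝ) :
    vecMulVec u w + vecMulVec w u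
      = vecMulVec u u + vecMulVec w w - vecMulVec (u - w) (u - w) := by
  ext a b; simp [vecMulVec_apply]; ring

private lemma dot_vmv {d : ℕ} (w u z w' : Fin d → ℝ) :
    w ⬝ᵥ ((vecMulVec u z) *ᵥ w') = (w ⬝ᵥ u) * (z ⬝ᵥ w') := by
  simp only [dotProduct, mulVec, vecMulVec_apply, Finset.sum_mul, Finset.mul_sum]
  rw [Finset.sum_comm]
  apply Finset.sum_congr rfl; intro b _
  apply Finset.sum_congr rfl; intro a _
  ring

private noncomputable def qf {d : ℕ} (w w' : Fin d → ℝ) :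
    Matrix (Fin d) (Fin d) ℝ →ₗ[ℝ] ℝ where
  toFun M := w ⬝ᵥ (M *ᵥ w')
  map_add' M N := by simp [Matrix.add_mulVec, dotProduct_add]
  map_smul' c M := by simp [Matrix.smul_mulVec]


/-- For a nondegenerate `d`-simplex in `ℝᵈ` (i.e. `d+1` affinely
independent vertices), the `n = d(d+1)/2` symmetric rank-one matrices
`e eᵀ` built from its edge vectors `e = xᵢ − xⱼ` (`i < j`) form a basis of the
real vector space of symmetric `d×d` matrices (formalized as: the family is
linearly independent and spans the submodule of symmetric matrices). -/
theorem stmt_0 (d : ℕ) (x : Fin (d + 1) → (Fin d → ℝ))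
    (hx : AffineIndependent ℝ x)
    (e : {p : Fin (d + 1) × Fin (d + 1) // p.1 < p.2} → (Fin d → ℝ))
    (he : ∀ p, e p = x p.1.1 - x p.1.2) :
    LinearIndependent ℝ (fun p => Matrix.vecMulVec (e p) (e p)) ∧
    (∀ M : Matrix (Fin d) (Fin d) ℝ,
      M ∈ Submodule.span ℝ (Set.range (fun p => Matrix.vecMulVec (e p) (e p)))
        ↔ M.IsSymm) := by
  classical
  set v' : Fin (d + 1) → (Fin d → ℝ) := fun i => x i - x (Fin.last d) with hv'def
  have hv'last : v' (Fin.last d) = 0 := by simp [hv'def]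
  have he' : ∀ p, e p = v' p.1.1 - v' p.1.2 := by
    intro p; rw [he]; simp [hv'def]
  set v : Fin d → (Fin d → ℝ) := fun i => v' i.castSucc with hvdef
  have hvli : LinearIndependent ℝ v := by
    have h1 := (affineIndependent_iff_linearIndependent_vsub ℝ x (Fin.last d)).mp hx
    have h2 : Function.Injective
        (fun i : Fin d => (⟨i.castSucc, (Fin.castSucc_lt_last i).ne⟩ :
          {j : Fin (d+1) // j ≠ Fin.last d})) := by
      intro a b hab
      simpa [Subtype.ext_iff, Fin.castSucc_inj] using hab
    have h3 := h1.comp _ h2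
    exact h3
  set A : Matrix (Fin d) (Fin d) ℝ := Matrix.of (fun a i => v i a) with hAdef
  have hAcol : ∀ i, Aᵀ i = v i := fun i => rfl
  have hAunit : IsUnit A := by
    rw [← linearIndependent_cols_iff_isUnit]
    exact hvli
  have hdet : IsUnit A.det := (isUnit_iff_isUnit_det A).mp hAunit
  have hinv1 : A⁻¹ * A = 1 := nonsing_inv_mul _ hdet
  have hinv2 : A * A⁻¹ = 1 := mul_nonsing_inv _ hdet
  set f : {p : Fin (d + 1) × Fin (d + 1) // p.1 < p.2} → Matrix (Fin d) (Fin d) ℝ :=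
    fun p => vecMulVec (e p) (e p) with hfdef
  set S := Submodule.span ℝ (Set.range f) with hSdef
  have hQmem : ∀ i j : Fin (d + 1), vecMulVec (v' i - v' j) (v' i - v' j) ∈ S := by
    intro i j
    rcases lt_trichotomy i j with h | h | h
    · have hm : f ⟨(i, j), h⟩ ∈ S := Submodule.subset_span (Set.mem_range_self _)
      have hfe : f ⟨(i, j), h⟩ = vecMulVec (v' i - v' j) (v' i - v' j) := by
        show vecMulVec (e ⟨(i, j), h⟩) (e ⟨(i, j), h⟩) = _
        rw [he' ⟨(i, j), h⟩]
      rwa [hfe] at hm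
    · subst h
      have : vecMulVec (v' i - v' i) (v' i - v' i) = 0 := by
        ext a b; simp [vecMulVec_apply]
      rw [this]; exact Submodule.zero_mem _
    · have hm : f ⟨(j, i), h⟩ ∈ S := Submodule.subset_span (Set.mem_range_self _)
      have hfe : f ⟨(j, i), h⟩ = vecMulVec (v' i - v' j) (v' i - v' j) := by
        show vecMulVec (e ⟨(j, i), h⟩) (e ⟨(j, i), h⟩) = _
        rw [he' ⟨(j, i), h⟩]
        rw [show v' j - v' i = -(v' i - v' j) from (neg_sub _ _).symm, vmv_neg]
      rwa [hfe] at hm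
  have hQmem' : ∀ i : Fin d, vecMulVec (v i) (v i) ∈ S := by
    intro i
    have := hQmem i.castSucc (Fin.last d)
    rwa [hv'last, sub_zero] at this
  have hsym : ∀ i j : Fin d,
      vecMulVec (v i) (v j) + vecMulVec (v j) (v i) ∈ S := by
    intro i j
    rw [vmv_symm_id]
    exact sub_mem (add_mem (hQmem' i) (hQmem' j)) (hQmem i.castSucc j.castSucc)
  have hsymm_of_mem : ∀ M : Matrix (Fin d) (Fin d) ℝ, M ∈ S → M.IsSymm := by
    intro M hM
    induction hM using Submodule.span_induction with
    | mem N hN =>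
      obtain ⟨p, rfl⟩ := hN
      show (vecMulVec (e p) (e p))ᵀ = vecMulVec (e p) (e p)
      ext a b; simp [vecMulVec_apply, mul_comm]
    | zero => exact Matrix.isSymm_zero
    | add N₁ N₂ _ _ h1 h2 => exact h1.add h2
    | smul c N _ h => exact h.smul c
  have hmem_of_symm : ∀ M : Matrix (Fin d) (Fin d) ℝ, M.IsSymm → M ∈ S := by
    intro M hM
    set C : Matrix (Fin d) (Fin d) ℝ := A⁻¹ * M * A⁻¹ᵀ with hCdef
    have h4 : A⁻¹ᵀ * Aᵀ = 1 := by rw [← transpose_mul, hinv2, transpose_one]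
    have hACA : A * C * Aᵀ = M := by
      calc A * (A⁻¹ * M * A⁻¹ᵀ) * Aᵀ = (A * A⁻¹) * M * (A⁻¹ᵀ * Aᵀ) := by
            simp only [Matrix.mul_assoc]
        _ = M := by rw [hinv2, h4, Matrix.one_mul, Matrix.mul_one]
    have hCsymm : ∀ i j, C j i = C i j := by
      intro i j
      have : Cᵀ = C := by
        rw [hCdef, transpose_mul, transpose_mul, transpose_transpose, hM.eq,
          Matrix.mul_assoc]
      calc C j i = Cᵀ i j := rfl
        _ = C i j := by rw [this]
    have hMsum : M = ∑ p : Fin d × Fin d, C p.1 p.2 • vecMulVec (v p.1) (v p.2) := by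
      rw [← hACA]; ext k l
      rw [Matrix.sum_apply]
      calc (A * C * Aᵀ) k l = ∑ j, ∑ i, A k i * C i j * A l j := by
            simp [Matrix.mul_apply, transpose_apply, Finset.sum_mul]
        _ = ∑ i, ∑ j, A k i * C i j * A l j := Finset.sum_comm
        _ = ∑ c : Fin d × Fin d, (C c.1 c.2 • vecMulVec (v c.1) (v c.2)) k l := by
            rw [Fintype.sum_prod_type]
            apply Finset.sum_congr rfl; intro i _
            apply Finset.sum_congr rfl; intro j _
            simp only [Matrix.smul_apply, vecMulVec_apply, smul_eq_mul]
            show A k i * C i j * A l j = C i j * (v i k * v j l)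
            have h5 : A k i = v i k := rfl
            have h6 : A l j = v j l := rfl
            rw [h5, h6]; ring
    have h2M : M + M ∈ S := by
      have hswap : ∑ p : Fin d × Fin d, C p.1 p.2 • vecMulVec (v p.2) (v p.1)
          = ∑ p : Fin d × Fin d, C p.1 p.2 • vecMulVec (v p.1) (v p.2) := by
        rw [← Equiv.sum_comp (Equiv.prodComm (Fin d) (Fin d))
          (fun p : Fin d × Fin d => C p.1 p.2 • vecMulVec (v p.1) (v p.2))]
        apply Finset.sum_congr rfl; intro p _
        simp only [Equiv.prodComm_apply, Prod.fst_swap, Prod.snd_swap]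
        rw [hCsymm p.1 p.2]
      have hsum2 : M + M = ∑ p : Fin d × Fin d,
          C p.1 p.2 • (vecMulVec (v p.1) (v p.2) + vecMulVec (v p.2) (v p.1)) := by
        simp only [smul_add, Finset.sum_add_distrib, hswap]
        rw [← hMsum]
      rw [hsum2]
      exact Submodule.sum_mem _ fun p _ => Submodule.smul_mem _ _ (hsym p.1 p.2)
    have : M = (2:ℝ)⁻¹ • (M + M) := by
      rw [← two_smul ℝ M, smul_smul, inv_mul_cancel₀ (two_ne_zero), one_smul]
    rw [this]
    exact Submodule.smul_mem _ _ h2M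
  constructor
  · rw [Fintype.linearIndependent_iff]
    intro g hg
    set w : Fin d → (Fin d → ℝ) := fun k => A⁻¹ k with hwdef
    have hwv : ∀ k i, w k ⬝ᵥ v i = if k = i then 1 else 0 := by
      intro k i
      have h7 : (A⁻¹ * A) k i = (1 : Matrix (Fin d) (Fin d) ℝ) k i := by rw [hinv1]
      rw [Matrix.mul_apply, Matrix.one_apply] at h7
      simp only [dotProduct]; exact h7
    have hwv' : ∀ (k : Fin d) (i : Fin (d + 1)),
        w k ⬝ᵥ v' i = if i = k.castSucc then 1 else 0 := by
      intro k i
      induction i using Fin.lastCases with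
      | last => simp [hv'last, (Fin.castSucc_lt_last k).ne']
      | cast i =>
          rw [show v' i.castSucc = v i from rfl, hwv]
          simp only [Fin.castSucc_inj]
          by_cases h : k = i
          · simp [h]
          · rw [if_neg h, if_neg (fun hh => h hh.symm)]
    have he_dot : ∀ (k : Fin d) (p : {p : Fin (d + 1) × Fin (d + 1) // p.1 < p.2}),
        w k ⬝ᵥ e p = (if p.1.1 = k.castSucc then (1:ℝ) else 0)
          - (if p.1.2 = k.castSucc then (1:ℝ) else 0) := by
      intro k p
      rw [he' p, dotProduct_sub, hwv', hwv']
    have key : ∀ k l : Fin d,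
        ∑ p : {p : Fin (d + 1) × Fin (d + 1) // p.1 < p.2}, g p *
          (((if p.1.1 = k.castSucc then (1:ℝ) else 0)
              - (if p.1.2 = k.castSucc then (1:ℝ) else 0)) *
           ((if p.1.1 = l.castSucc then (1:ℝ) else 0)
              - (if p.1.2 = l.castSucc then (1:ℝ) else 0))) = 0 := by
      intro k l
      have h0 := congrArg (qf (w k) (w l)) hg
      rw [map_sum, map_zero] at h0
      calc ∑ p : {p : Fin (d + 1) × Fin (d + 1) // p.1 < p.2}, g p *
          (((if p.1.1 = k.castSucc then (1:ℝ) else 0)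
              - (if p.1.2 = k.castSucc then (1:ℝ) else 0)) *
           ((if p.1.1 = l.castSucc then (1:ℝ) else 0)
              - (if p.1.2 = l.castSucc then (1:ℝ) else 0)))
          = ∑ p : {p : Fin (d + 1) × Fin (d + 1) // p.1 < p.2},
              (qf (w k) (w l)) (g p • f p) := by
            apply Finset.sum_congr rfl; intro p _
            rw [_root_.map_smul]
            show _ = g p * (w k ⬝ᵥ (vecMulVec (e p) (e p) *ᵥ w l))
            rw [dot_vmv, dotProduct_comm (e p) (w l), he_dot, he_dot]
        _ = 0 := h0
    have g1 : ∀ p : {p : Fin (d + 1) × Fin (d + 1) // p.1 < p.2},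
        p.1.2 ≠ Fin.last d → g p = 0 := by
      rintro ⟨⟨i, j⟩, hij⟩ hp
      simp only at hp
      have hjne : j ≠ Fin.last d := hp
      have hine : i ≠ Fin.last d := (hij.trans (lt_of_le_of_ne (Fin.le_last j) hjne)).ne
      set i0 := i.castPred hine with hi0
      set j0 := j.castPred hjne with hj0
      have hci : i0.castSucc = i := Fin.castSucc_castPred i hine
      have hcj : j0.castSucc = j := Fin.castSucc_castPred j hjne
      have hkey := key i0 j0
      rw [hci, hcj] at hkey
      have hone : ∀ q : {p : Fin (d + 1) × Fin (d + 1) // p.1 < p.2},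
          q ∈ (Finset.univ : Finset _) →
          q ≠ ⟨(i, j), hij⟩ → g q *
          (((if q.1.1 = i then (1:ℝ) else 0) - (if q.1.2 = i then (1:ℝ) else 0)) *
           ((if q.1.1 = j then (1:ℝ) else 0) - (if q.1.2 = j then (1:ℝ) else 0))) = 0 := by
        rintro ⟨⟨a, b⟩, hab⟩ _ hq
        have hab' : a < b := hab
        have hij' : i < j := hij
        have hne : a ≠ i ∨ b ≠ j := by
          by_contra hcon
          push_neg at hcon
          exact hq (by simp [hcon.1, hcon.2])
        show g ⟨(a, b), hab⟩ *
          (((if a = i then (1:ℝ) else 0) - (if b = i then (1:ℝ) else 0)) *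
           ((if a = j then (1:ℝ) else 0) - (if b = j then (1:ℝ) else 0))) = 0
        by_cases ha : a = i
        · have hb : b ≠ j := by
            rcases hne with h | h
            · exact absurd ha h
            · exact h
          have hbi : b ≠ i := by rw [← ha]; exact hab'.ne'
          have haj : a ≠ j := by rw [ha]; exact hij'.ne
          rw [if_pos ha, if_neg hbi, if_neg haj, if_neg hb]; ring
        · by_cases hbi : b = i
          · have haj : a ≠ j := by
              intro hcon
              rw [hbi] at hab'
              rw [← hcon] at hij'
              exact lt_irrefl a (hab'.trans hij')
            have hbj : b ≠ j := by rw [hbi]; exact hij'.ne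
            rw [if_neg ha, if_pos hbi, if_neg haj, if_neg hbj]; ring
          · rw [if_neg ha, if_neg hbi]; ring
      have hsum := Finset.sum_eq_single_of_mem (⟨(i, j), hij⟩ :
        {p : Fin (d + 1) × Fin (d + 1) // p.1 < p.2}) (Finset.mem_univ _) hone
      rw [hsum] at hkey
      have hji : j ≠ i := Fin.ne_of_gt hij
      have hijne : i ≠ j := Fin.ne_of_lt hij
      have hkey2 : g ⟨(i, j), hij⟩ *
          (((if i = i then (1:ℝ) else 0) - (if j = i then (1:ℝ) else 0)) *
           ((if i = j then (1:ℝ) else 0) - (if j = j then (1:ℝ) else 0))) = 0 := hkey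
      rw [if_pos rfl, if_neg hji, if_pos rfl, if_neg hijne] at hkey2
      have : -(g ⟨(i, j), hij⟩) = 0 := by linarith [hkey2]
      linarith [this]
    intro p
    obtain ⟨⟨i, j⟩, hij⟩ := p
    by_cases hjl : j = Fin.last d
    · subst hjl
      have hine : i ≠ Fin.last d := hij.ne
      set i0 := i.castPred hine with hi0
      have hci : i0.castSucc = i := Fin.castSucc_castPred i hine
      have hkey := key i0 i0
      rw [hci] at hkey
      have hone : ∀ q : {p : Fin (d + 1) × Fin (d + 1) // p.1 < p.2},
          q ∈ (Finset.univ : Finset _) →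
          q ≠ ⟨(i, Fin.last d), hij⟩ → g q *
          (((if q.1.1 = i then (1:ℝ) else 0) - (if q.1.2 = i then (1:ℝ) else 0)) *
           ((if q.1.1 = i then (1:ℝ) else 0) - (if q.1.2 = i then (1:ℝ) else 0))) = 0 := by
        rintro ⟨⟨a, b⟩, hab⟩ _ hq
        show g ⟨(a, b), hab⟩ *
          (((if a = i then (1:ℝ) else 0) - (if b = i then (1:ℝ) else 0)) *
           ((if a = i then (1:ℝ) else 0) - (if b = i then (1:ℝ) else 0))) = 0
        by_cases hbl : b = Fin.last d
        · subst hbl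
          have ha : a ≠ i := by
            intro hcon
            exact hq (by simp [hcon])
          have hbi : Fin.last d ≠ i := fun hcon => hine hcon.symm
          rw [if_neg ha, if_neg hbi]; ring
        · have := g1 ⟨(a, b), hab⟩ hbl
          show g ⟨(a, b), hab⟩ * _ = 0
          rw [this]; ring
      have hsum := Finset.sum_eq_single_of_mem (⟨(i, Fin.last d), hij⟩ :
        {p : Fin (d + 1) × Fin (d + 1) // p.1 < p.2}) (Finset.mem_univ _) hone
      rw [hsum] at hkey
      have hli : Fin.last d ≠ i := fun hcon => hine hcon.symm
      have hkey2 : g ⟨(i, Fin.last d), hij⟩ *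
          (((if i = i then (1:ℝ) else 0) - (if Fin.last d = i then (1:ℝ) else 0)) *
           ((if i = i then (1:ℝ) else 0) - (if Fin.last d = i then (1:ℝ) else 0))) = 0 := hkey
      rw [if_pos rfl, if_neg hli] at hkey2
      linarith [hkey2]
    · exact g1 ⟨(i, j), hij⟩ hjl
  · intro M
    exact ⟨hsymm_of_mem M, hmem_of_symm M⟩
end

section
/- For a triangle with vertices x_i, x_j, x_k, the edge coefficient α_{i,j} satisfying |T| ||u||² = Σ α |⟨e,u⟩|² is given by α_{i,j} = (1/2) cot θ_{i,j}, where θ_{i,j} is the interior angle at vertex x_k opposing edge e_{i,j}. -/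
open MeasureTheory EuclideanGeometry Set Pointwise


lemma cot_formula (x y : EuclideanSpace ℝ (Fin 2)) (h : x 0 * y 1 - x 1 * y 0 ≠ 0) :
    Real.cos (InnerProductGeometry.angle x y) / Real.sin (InnerProductGeometry.angle x y)
      = (x 0 * y 0 + x 1 * y 1) / |x 0 * y 1 - x 1 * y 0| := by
  have hx : x ≠ 0 := by
    rintro rfl; simp at h
  have hy : y ≠ 0 := by
    rintro rfl; simp at h
  have hnx : ‖x‖ ≠ 0 := norm_ne_zero_iff.2 hx
  have hny : ‖y‖ ≠ 0 := norm_ne_zero_iff.2 hy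
  have hip : ∀ z w : EuclideanSpace ℝ (Fin 2), (inner ℝ z w : ℝ) = z 0 * w 0 + z 1 * w 1 := by
    intro z w
    simp [PiLp.inner_apply, Fin.sum_univ_two, mul_comm]
  have hsin : Real.sin (InnerProductGeometry.angle x y) * (‖x‖ * ‖y‖)
      = |x 0 * y 1 - x 1 * y 0| := by
    rw [InnerProductGeometry.sin_angle_mul_norm_mul_norm]
    rw [show (inner ℝ x x : ℝ) * (inner ℝ y y : ℝ) - (inner ℝ x y : ℝ) * (inner ℝ x y : ℝ)
        = (x 0 * y 1 - x 1 * y 0) ^ 2 by rw [hip, hip, hip]; ring]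
    exact Real.sqrt_sq_eq_abs _
  have hcos : Real.cos (InnerProductGeometry.angle x y) * (‖x‖ * ‖y‖)
      = x 0 * y 0 + x 1 * y 1 := by
    rw [InnerProductGeometry.cos_angle_mul_norm_mul_norm, hip]
  have habs : |x 0 * y 1 - x 1 * y 0| ≠ 0 := abs_ne_zero.2 h
  have hsne : Real.sin (InnerProductGeometry.angle x y) ≠ 0 := by
    intro h0
    rw [h0, zero_mul] at hsin
    exact habs hsin.symm
  rw [div_eq_div_iff hsne habs, ← hcos, ← hsin]
  ring

lemma coll_of_det (a b c : EuclideanSpace ℝ (Fin 2))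
    (hD : (b - a) 0 * (c - a) 1 - (b - a) 1 * (c - a) 0 = 0) :
    Collinear ℝ (Set.range ![a, b, c]) := by
  have hran : Set.range ![a, b, c] = {a, b, c} := by
    ext x
    simp [Fin.exists_fin_succ, Fin.exists_fin_two, or_assoc]
    tauto
  rw [hran]
  rw [collinear_iff_of_mem (Set.mem_insert a _)]
  have key : ∀ v : EuclideanSpace ℝ (Fin 2), ∀ t s : ℝ,
      b - a = t • v → c - a = s • v →
      ∃ v : EuclideanSpace ℝ (Fin 2), ∀ p ∈ ({a, b, c} : Set (EuclideanSpace ℝ (Fin 2))), ∃ r : ℝ, p = r • v +ᵥ a := by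
    intro v t s hb hc
    refine ⟨v, ?_⟩
    rintro p (rfl | rfl | rfl)
    · exact ⟨0, by simp⟩
    · exact ⟨t, by rw [← hb]; simp⟩
    · exact ⟨s, by rw [← hc]; simp⟩
  simp only [PiLp.sub_apply] at hD
  by_cases h0 : (c - a) 0 ≠ 0
  · refine key (c - a) ((b - a) 0 / (c - a) 0) 1 ?_ (by simp)
    ext k
    fin_cases k
    all_goals simp only [PiLp.sub_apply] at h0 ⊢
    all_goals simp only [PiLp.smul_apply]
    all_goals simp only [smul_eq_mul, Fin.mk_zero, Fin.mk_one, PiLp.sub_apply]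
    · field_simp
    · field_simp; linear_combination -hD
  by_cases h1 : (c - a) 1 ≠ 0
  · refine key (c - a) ((b - a) 1 / (c - a) 1) 1 ?_ (by simp)
    ext k
    fin_cases k
    all_goals simp only [PiLp.sub_apply] at h1 ⊢
    all_goals simp only [PiLp.smul_apply]
    all_goals simp only [smul_eq_mul, Fin.mk_zero, Fin.mk_one, PiLp.sub_apply]
    · field_simp; linear_combination hD
    · field_simp
  · push_neg at h0 h1
    have hca : c - a = 0 := by
      ext k; fin_cases k
      · exact h0
      · exact h1
    refine key (b - a) 1 0 (by simp) (by rw [hca]; simp)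

lemma det_ne_zero (a b c : EuclideanSpace ℝ (Fin 2))
    (hT : AffineIndependent ℝ ![a, b, c]) :
    (b - a) 0 * (c - a) 1 - (b - a) 1 * (c - a) 0 ≠ 0 := by
  intro hD
  rw [affineIndependent_iff_not_collinear] at hT
  exact hT (coll_of_det a b c hD)

lemma key_alg (a b c : EuclideanSpace ℝ (Fin 2)) (u : Fin 2 → ℂ) :
    ((b-a) 0 * (c-a) 1 - (b-a) 1 * (c-a) 0)^2 * (∑ k, ‖u k‖ ^ 2)
      = ((a-c) 0 * (b-c) 0 + (a-c) 1 * (b-c) 1) * ‖∑ k, ((a-b) k : ℂ) * u k‖ ^ 2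
      + ((b-a) 0 * (c-a) 0 + (b-a) 1 * (c-a) 1) * ‖∑ k, ((b-c) k : ℂ) * u k‖ ^ 2
      + ((c-b) 0 * (a-b) 0 + (c-b) 1 * (a-b) 1) * ‖∑ k, ((c-a) k : ℂ) * u k‖ ^ 2 := by
  simp only [Fin.sum_univ_two, ← Complex.sq_norm, Complex.sq_norm, Complex.normSq_apply,
    Complex.add_re, Complex.add_im, Complex.mul_re, Complex.mul_im,
    Complex.ofReal_re, Complex.ofReal_im, PiLp.sub_apply]
  ring

lemma vol_S2 : volume {p : ℝ × ℝ | 0 ≤ p.1 ∧ 0 ≤ p.2 ∧ p.1 + p.2 ≤ 1}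
    = ENNReal.ofReal (1 / 2) := by
  have hmeas : MeasurableSet {p : ℝ × ℝ | 0 ≤ p.1 ∧ 0 ≤ p.2 ∧ p.1 + p.2 ≤ 1} := by
    refine (measurableSet_le measurable_const measurable_fst).inter
      ((measurableSet_le measurable_const measurable_snd).inter
        (measurableSet_le (measurable_fst.add measurable_snd) measurable_const))
  rw [Measure.volume_eq_prod, Measure.prod_apply hmeas]
  have hslice : ∀ x : ℝ, volume (Prod.mk x ⁻¹' {p : ℝ × ℝ | 0 ≤ p.1 ∧ 0 ≤ p.2 ∧ p.1 + p.2 ≤ 1})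
      = Set.indicator (Set.Ici (0:ℝ)) (fun x => ENNReal.ofReal (1 - x)) x := by
    intro x
    by_cases hx : 0 ≤ x
    · rw [Set.indicator_of_mem (Set.mem_Ici.2 hx)]
      have : Prod.mk x ⁻¹' {p : ℝ × ℝ | 0 ≤ p.1 ∧ 0 ≤ p.2 ∧ p.1 + p.2 ≤ 1}
          = Set.Icc 0 (1 - x) := by
        ext y
        simp only [Set.mem_preimage, Set.mem_setOf_eq, Set.mem_Icc]
        constructor
        · rintro ⟨_, h1, h2⟩; exact ⟨h1, by linarith⟩
        · rintro ⟨h1, h2⟩; exact ⟨hx, h1, by linarith⟩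
      rw [this, Real.volume_Icc, sub_zero]
    · rw [Set.indicator_of_notMem (fun h => hx (Set.mem_Ici.1 h))]
      have : Prod.mk x ⁻¹' {p : ℝ × ℝ | 0 ≤ p.1 ∧ 0 ≤ p.2 ∧ p.1 + p.2 ≤ 1} = ∅ := by
        ext y; simp only [Set.mem_preimage, Set.mem_setOf_eq, Set.mem_empty_iff_false,
          iff_false]
        rintro ⟨h, _, _⟩; exact hx h
      rw [this, measure_empty]
  rw [lintegral_congr hslice, lintegral_indicator measurableSet_Ici _]
  rw [show Set.Ici (0:ℝ) = Set.Ico (0:ℝ) 1 ∪ Set.Ici (1:ℝ) from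
    (Set.Ico_union_Ici_eq_Ici (by norm_num)).symm]
  rw [lintegral_union measurableSet_Ici (Set.disjoint_left.2 fun x hx h1 => absurd hx.2 (not_lt.2 h1))]
  have h2 : ∫⁻ x in Set.Ici (1:ℝ), ENNReal.ofReal (1 - x) = 0 := by
    rw [setLIntegral_congr_fun measurableSet_Ici
      (fun x (hx : 1 ≤ x) => ENNReal.ofReal_eq_zero.2 (by linarith))]
    simp
  have h1 : ∫⁻ x in Set.Ico (0:ℝ) 1, ENNReal.ofReal (1 - x) = ENNReal.ofReal (1 / 2) := by
    rw [← ofReal_integral_eq_lintegral_ofReal]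
    · congr 1
      rw [MeasureTheory.integral_Ico_eq_integral_Ioo, ← MeasureTheory.integral_Ioc_eq_integral_Ioo, ← intervalIntegral.integral_of_le
        (by norm_num : (0:ℝ) ≤ 1)]
      have e2 : IntervalIntegrable (fun x : ℝ => x) volume 0 1 :=
        intervalIntegral.intervalIntegrable_id
      rw [intervalIntegral.integral_sub intervalIntegrable_const e2,
        intervalIntegral.integral_const]
      simp
      norm_num
    · exact ((continuous_const.sub continuous_id).integrableOn_Icc).mono_set
        Set.Ico_subset_Icc_self
    · exact (ae_restrict_iff' measurableSet_Ico).2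
        (ae_of_all _ (fun x hx => by simp only [Pi.zero_apply]; linarith [hx.2]))
  rw [h1, h2, add_zero]



lemma meas_S2 : MeasurableSet {p : ℝ × ℝ | 0 ≤ p.1 ∧ 0 ≤ p.2 ∧ p.1 + p.2 ≤ 1} :=
  (measurableSet_le measurable_const measurable_fst).inter
    ((measurableSet_le measurable_const measurable_snd).inter
      (measurableSet_le (measurable_fst.add measurable_snd) measurable_const))

lemma vol_SE : volume {x : EuclideanSpace ℝ (Fin 2) | 0 ≤ x 0 ∧ 0 ≤ x 1 ∧ x 0 + x 1 ≤ 1}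
    = ENNReal.ofReal (1 / 2) := by
  have hmp := (volume_preserving_finTwoArrow ℝ).comp
    (EuclideanSpace.volume_preserving_symm_measurableEquiv_toLp (Fin 2))
  have := hmp.measure_preimage meas_S2.nullMeasurableSet
  have hpre : ((MeasurableEquiv.finTwoArrow : (Fin 2 → ℝ) ≃ᵐ ℝ × ℝ)
        ∘ (MeasurableEquiv.toLp 2 (Fin 2 → ℝ)).symm)
      ⁻¹' {p : ℝ × ℝ | 0 ≤ p.1 ∧ 0 ≤ p.2 ∧ p.1 + p.2 ≤ 1}
      = {x : EuclideanSpace ℝ (Fin 2) | 0 ≤ x 0 ∧ 0 ≤ x 1 ∧ x 0 + x 1 ≤ 1} := by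
    rfl
  rw [hpre] at this
  rw [this, vol_S2]

lemma hull_eq : convexHull ℝ {(0 : EuclideanSpace ℝ (Fin 2)),
      EuclideanSpace.single 0 1, EuclideanSpace.single 1 1}
    = {x : EuclideanSpace ℝ (Fin 2) | 0 ≤ x 0 ∧ 0 ≤ x 1 ∧ x 0 + x 1 ≤ 1} := by
  apply le_antisymm
  · apply convexHull_min
    · rintro x (rfl | rfl | rfl)
      · refine ⟨le_refl 0, le_refl 0, by norm_num⟩
      · refine ⟨?_, ?_, ?_⟩ <;> simp [EuclideanSpace.single_apply]
      · refine ⟨?_, ?_, ?_⟩ <;> simp [EuclideanSpace.single_apply]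
    · rintro x ⟨hx0, hx1, hxs⟩ y ⟨hy0, hy1, hys⟩ p q hp hq hpq
      refine ⟨?_, ?_, ?_⟩ <;>
        simp only [PiLp.add_apply, PiLp.smul_apply, smul_eq_mul] <;> nlinarith
  · rintro x ⟨hx0, hx1, hxs⟩
    set z : Fin 3 → EuclideanSpace ℝ (Fin 2) :=
      ![0, EuclideanSpace.single 0 1, EuclideanSpace.single 1 1] with hz
    have hcm : Finset.univ.centerMass ![1 - x 0 - x 1, x 0, x 1] z
        ∈ convexHull ℝ ({0, EuclideanSpace.single 0 1, EuclideanSpace.single 1 1} :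
            Set (EuclideanSpace ℝ (Fin 2))) :=
      Finset.centerMass_mem_convexHull (Finset.univ : Finset (Fin 3))
        (by intro i _; fin_cases i <;> simp <;> linarith)
        (by simp [Fin.sum_univ_three]; linarith)
        (by intro i _; fin_cases i <;> simp [hz, Set.mem_insert_iff])
    have hx : Finset.univ.centerMass ![1 - x 0 - x 1, x 0, x 1] z = x := by
      rw [Finset.centerMass]
      rw [show (∑ i, (![1 - x 0 - x 1, x 0, x 1]) i) = 1 by
        simp [Fin.sum_univ_three]; ring]
      rw [inv_one, one_smul, Fin.sum_univ_three]
      ext k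
      fin_cases k <;>
        simp [hz, PiLp.add_apply, PiLp.smul_apply, EuclideanSpace.single_apply]
    rwa [hx] at hcm





lemma vol_triangle (a b c : EuclideanSpace ℝ (Fin 2)) :
    volume (convexHull ℝ {a, b, c})
      = ENNReal.ofReal |(b - a) 0 * (c - a) 1 - (b - a) 1 * (c - a) 0|
          * ENNReal.ofReal (1 / 2) := by
  set B := PiLp.basisFun 2 ℝ (Fin 2) with hB
  set M : Matrix (Fin 2) (Fin 2) ℝ :=
    !![(b - a) 0, (c - a) 0; (b - a) 1, (c - a) 1] with hM
  set L := Matrix.toLin B B M with hL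
  have hdet : LinearMap.det L = (b - a) 0 * (c - a) 1 - (b - a) 1 * (c - a) 0 := by
    rw [hL, LinearMap.det_toLin, hM, Matrix.det_fin_two_of]; ring
  have hB0 : B 0 = EuclideanSpace.single 0 1 := by
    rw [hB, PiLp.basisFun_apply]
  have hB1 : B 1 = EuclideanSpace.single 1 1 := by
    rw [hB, PiLp.basisFun_apply]
  have hL0 : L (EuclideanSpace.single 0 1) = b - a := by
    rw [← hB0, hL, Matrix.toLin_self]
    ext k
    rw [Fin.sum_univ_two]
    fin_cases k <;>
      simp [hM, hB0, hB1, PiLp.add_apply, PiLp.smul_apply, EuclideanSpace.single_apply]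
  have hL1 : L (EuclideanSpace.single 1 1) = c - a := by
    rw [← hB1, hL, Matrix.toLin_self]
    ext k
    rw [Fin.sum_univ_two]
    fin_cases k <;>
      simp [hM, hB0, hB1, PiLp.add_apply, PiLp.smul_apply, EuclideanSpace.single_apply]
  have himg : ⇑L '' {0, EuclideanSpace.single 0 1, EuclideanSpace.single 1 1}
      = {0, b - a, c - a} := by
    rw [Set.image_insert_eq, Set.image_insert_eq, Set.image_singleton, map_zero, hL0, hL1]
  have hset : ({a, b, c} : Set (EuclideanSpace ℝ (Fin 2)))
      = a +ᵥ ({0, b - a, c - a} : Set (EuclideanSpace ℝ (Fin 2))) := by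
    show _ = (a + ·) '' _
    rw [Set.image_insert_eq, Set.image_insert_eq, Set.image_singleton]
    simp only [add_zero, add_sub_cancel]
  rw [hset, convexHull_vadd, measure_vadd, ← himg, ← LinearMap.image_convexHull,
    Measure.addHaar_image_linearMap, hdet, hull_eq, vol_SE]

/-- For a nondegenerate triangle `T` in `ℝ²` with vertices
`a, b, c`, the edge coefficients in the identity
`|T|·‖u‖² = Σ_{edges} α |⟨e,u⟩|²` (for all `u ∈ ℂ²`) are
`α_{edge} = (1/2)·cot θ`, where `θ` is the interior angle at the vertex
opposite the edge. -/
theorem stmt_2 (a b c : EuclideanSpace ℝ (Fin 2))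
    (hT : AffineIndependent ℝ ![a, b, c]) :
    ∀ u : Fin 2 → ℂ,
      (volume (convexHull ℝ {a, b, c})).toReal * ∑ k, ‖u k‖ ^ 2
        = (1 / 2) * (Real.cos (∠ a c b) / Real.sin (∠ a c b))
              * ‖∑ k, ((a - b) k : ℂ) * u k‖ ^ 2
          + (1 / 2) * (Real.cos (∠ b a c) / Real.sin (∠ b a c))
              * ‖∑ k, ((b - c) k : ℂ) * u k‖ ^ 2
          + (1 / 2) * (Real.cos (∠ c b a) / Real.sin (∠ c b a))
              * ‖∑ k, ((c - a) k : ℂ) * u k‖ ^ 2 := by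
  intro u
  set D := (b - a) 0 * (c - a) 1 - (b - a) 1 * (c - a) 0 with hDdef
  have hD : D ≠ 0 := det_ne_zero a b c hT
  have hKpos : (0:ℝ) < |D| := abs_pos.2 hD
  have hvol : (volume (convexHull ℝ {a, b, c})).toReal = |D| / 2 := by
    rw [vol_triangle a b c, ENNReal.toReal_mul, ENNReal.toReal_ofReal (abs_nonneg _),
      ENNReal.toReal_ofReal (by norm_num : (0:ℝ) ≤ 1/2)]
    ring
  -- the three angles
  have hang1 : Real.cos (∠ a c b) / Real.sin (∠ a c b)
      = ((a-c) 0 * (b-c) 0 + (a-c) 1 * (b-c) 1) / |D| := by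
    have hd : (a-c) 0 * (b-c) 1 - (a-c) 1 * (b-c) 0 = D := by
      simp only [hDdef, PiLp.sub_apply]; ring
    rw [show (∠ a c b) = InnerProductGeometry.angle (a - c) (b - c) by
      simp [EuclideanGeometry.angle, vsub_eq_sub]]
    rw [cot_formula (a-c) (b-c) (by rw [hd]; exact hD), hd]
  have hang2 : Real.cos (∠ b a c) / Real.sin (∠ b a c)
      = ((b-a) 0 * (c-a) 0 + (b-a) 1 * (c-a) 1) / |D| := by
    have hd : (b-a) 0 * (c-a) 1 - (b-a) 1 * (c-a) 0 = D := rfl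
    rw [show (∠ b a c) = InnerProductGeometry.angle (b - a) (c - a) by
      simp [EuclideanGeometry.angle, vsub_eq_sub]]
    rw [cot_formula (b-a) (c-a) (by rw [hd]; exact hD), hd]
  have hang3 : Real.cos (∠ c b a) / Real.sin (∠ c b a)
      = ((c-b) 0 * (a-b) 0 + (c-b) 1 * (a-b) 1) / |D| := by
    have hd : (c-b) 0 * (a-b) 1 - (c-b) 1 * (a-b) 0 = D := by
      simp only [hDdef, PiLp.sub_apply]; ring
    rw [show (∠ c b a) = InnerProductGeometry.angle (c - b) (a - b) by
      simp [EuclideanGeometry.angle, vsub_eq_sub]]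
    rw [cot_formula (c-b) (a-b) (by rw [hd]; exact hD), hd]
  have key := key_alg a b c u
  rw [hvol, hang1, hang2, hang3]
  have habs2 : |D| * |D| = D * D := abs_mul_abs_self D
  have hKne : |D| ≠ 0 := ne_of_gt hKpos
  set S := ∑ k, ‖u k‖ ^ 2 with hS
  set A1 := ‖∑ k, ((a - b) k : ℂ) * u k‖ ^ 2 with hA1
  set A2 := ‖∑ k, ((b - c) k : ℂ) * u k‖ ^ 2 with hA2
  set A3 := ‖∑ k, ((c - a) k : ℂ) * u k‖ ^ 2 with hA3
  set I1 := (a-c) 0 * (b-c) 0 + (a-c) 1 * (b-c) 1 with hI1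
  set I2 := (b-a) 0 * (c-a) 0 + (b-a) 1 * (c-a) 1 with hI2
  set I3 := (c-b) 0 * (a-b) 0 + (c-b) 1 * (a-b) 1 with hI3
  have key' : D ^ 2 * S = I1 * A1 + I2 * A2 + I3 * A3 := key
  field_simp
  linear_combination S * habs2 + key'
end

section
/- For edge coefficients α_{j,k} of a nondegenerate d-simplex S (satisfying |S| I = Σ α_{j,k} e_{j,k} e_{j,k}^T), the coefficient vector α is the unique solution of the linear system M α = b, where M_{i,j} = ⟨e_i, e_j⟩² over all pairs of edges and b_i = |S| ||e_i||². Moreover the matrix M is symmetric positive definite. -/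
set_option maxHeartbeats 1000000 in
theorem key_li {d : ℕ} (x : Fin (d + 1) → (Fin d → ℝ)) (hx : AffineIndependent ℝ x)
    (e : {p : Fin (d + 1) × Fin (d + 1) // p.1 < p.2} → (Fin d → ℝ))
    (he : ∀ p, e p = x p.1.1 - x p.1.2)
    (c : {p : Fin (d + 1) × Fin (d + 1) // p.1 < p.2} → ℝ)
    (hc : ∀ k l, ∑ p, c p * e p k * e p l = 0) : c = 0 := by
  rcases Nat.eq_zero_or_pos d with hd | hd
  · funext p
    have h2 : (p.1.1 : ℕ) < p.1.2 := p.2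
    have h3 : (p.1.2 : ℕ) < d + 1 := p.1.2.is_lt
    omega
  haveI : Nonempty (Fin d) := ⟨⟨0, hd⟩⟩
  have li0 := (affineIndependent_iff_linearIndependent_vsub ℝ x 0).mp hx
  have li : LinearIndependent ℝ (fun i : Fin d => x i.succ - x 0) := by
    have hinj : Function.Injective (fun i : Fin d => (⟨i.succ, Fin.succ_ne_zero i⟩ : {j : Fin (d+1) // j ≠ 0})) := by
      intro a b h
      have := congrArg Subtype.val h
      simpa [Fin.succ_inj] using this
    exact li0.comp _ hinj
  have hcard : Fintype.card (Fin d) = Module.finrank ℝ (Fin d → ℝ) := by simp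
  let B : Module.Basis (Fin d) ℝ (Fin d → ℝ) := basisOfLinearIndependentOfCardEqFinrank li hcard
  have hB : ∀ i, B i = x i.succ - x 0 := fun i => by
    simp [B, coe_basisOfLinearIndependentOfCardEqFinrank]
  set φ : Fin d → ((Fin d → ℝ) →ₗ[ℝ] ℝ) := fun i => B.coord i with hφ
  have hφu : ∀ i m : Fin d, φ i (x m.succ - x 0) = if m = i then 1 else 0 := by
    intro i m
    rw [← hB m]
    simp [φ, Module.Basis.coord_apply, Module.Basis.repr_self, Finsupp.single_apply]
  have hφe : ∀ (i : Fin d) (p : {p : Fin (d + 1) × Fin (d + 1) // p.1 < p.2}),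
      φ i (e p) = (if p.1.1 = i.succ then (1:ℝ) else 0) - (if p.1.2 = i.succ then 1 else 0) := by
    intro i p
    have hv : ∀ v : Fin (d+1), φ i (x v - x 0) = if v = i.succ then (1:ℝ) else 0 := by
      intro v
      induction v using Fin.cases with
      | zero => simp [(Fin.succ_ne_zero i).symm]
      | succ m => rw [hφu i m]; simp [Fin.succ_inj]
    have hsplit : e p = (x p.1.1 - x 0) - (x p.1.2 - x 0) := by rw [he]; abel
    rw [hsplit, map_sub, hv, hv]
  -- the key quadratic relations
  have hS : ∀ i l : Fin d, ∑ p, c p * φ i (e p) * φ l (e p) = 0 := by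
    intro i l
    have expand : ∀ p : {p : Fin (d + 1) × Fin (d + 1) // p.1 < p.2},
        c p * φ i (e p) * φ l (e p)
        = ∑ k, ∑ m, (φ i fun j => if k = j then (1:ℝ) else 0) *
            (φ l fun j => if m = j then (1:ℝ) else 0) * (c p * e p k * e p m) := by
      intro p
      rw [mul_assoc, LinearMap.pi_apply_eq_sum_univ (φ i) (e p),
        LinearMap.pi_apply_eq_sum_univ (φ l) (e p), Finset.sum_mul_sum, Finset.mul_sum]
      refine Finset.sum_congr rfl fun k _ => ?_
      rw [Finset.mul_sum]
      refine Finset.sum_congr rfl fun m _ => ?_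
      simp only [smul_eq_mul]
      ring
    calc ∑ p, c p * φ i (e p) * φ l (e p)
        = ∑ p, ∑ k, ∑ m, (φ i fun j => if k = j then (1:ℝ) else 0) *
            (φ l fun j => if m = j then (1:ℝ) else 0) * (c p * e p k * e p m) :=
          Finset.sum_congr rfl fun p _ => expand p
      _ = ∑ k, ∑ m, (φ i fun j => if k = j then (1:ℝ) else 0) *
            (φ l fun j => if m = j then (1:ℝ) else 0) * ∑ p, c p * e p k * e p m := by
          rw [Finset.sum_comm]
          refine Finset.sum_congr rfl fun k _ => ?_
          rw [Finset.sum_comm]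
          refine Finset.sum_congr rfl fun m _ => ?_
          rw [Finset.mul_sum]
      _ = 0 := by
          simp [hc]
  have hS' : ∀ i l : Fin d, ∑ p : {p : Fin (d + 1) × Fin (d + 1) // p.1 < p.2},
      c p * ((if p.1.1 = i.succ then (1:ℝ) else 0) - (if p.1.2 = i.succ then 1 else 0)) *
        ((if p.1.1 = l.succ then (1:ℝ) else 0) - (if p.1.2 = l.succ then 1 else 0)) = 0 := by
    intro i l
    refine Eq.trans ?_ (hS i l)
    exact Finset.sum_congr rfl fun p _ => by rw [hφe i p, hφe l p]
  -- extraction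
  have h1 : ∀ p : {p : Fin (d + 1) × Fin (d + 1) // p.1 < p.2}, p.1.1 ≠ 0 → c p = 0 := by
    intro p hp0
    have hplt : p.1.1 < p.1.2 := p.2
    have hp2 : p.1.2 ≠ 0 := by
      intro h; rw [h] at hplt; exact absurd hplt (Fin.not_lt_zero _)
    have hi : (p.1.1.pred hp0).succ = p.1.1 := Fin.succ_pred _ _
    have hl : (p.1.2.pred hp2).succ = p.1.2 := Fin.succ_pred _ _
    have hsum := hS' (p.1.1.pred hp0) (p.1.2.pred hp2)
    simp only [hi, hl] at hsum
    rw [Finset.sum_eq_single p] at hsum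
    · simp only [if_pos rfl, if_neg (ne_of_gt hplt), if_neg (ne_of_lt hplt)] at hsum
      norm_num at hsum
      linarith
    · intro q _ hqp
      by_cases ha : q.1.1 = p.1.1 <;> by_cases hb : q.1.2 = p.1.1 <;>
        by_cases ha' : q.1.1 = p.1.2 <;> by_cases hb' : q.1.2 = p.1.2 <;>
        first
          | (exfalso; exact absurd (ha.symm.trans ha') (ne_of_lt hplt))
          | (exfalso; exact hqp (Subtype.ext (Prod.ext ha hb')))
          | (exfalso; have := q.2; rw [ha', hb] at this; exact absurd this (lt_asymm hplt))
          | (exfalso; exact absurd (hb.symm.trans hb') (ne_of_lt hplt))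
          | (simp [ha, hb, ha', hb']; try ring;
             try (intro h; exact absurd h (ne_of_lt hplt));
             try (intro h; exact absurd h.symm (ne_of_lt hplt)))
    · intro h; exact absurd (Finset.mem_univ p) h
  have h2 : ∀ p : {p : Fin (d + 1) × Fin (d + 1) // p.1 < p.2}, p.1.1 = 0 → c p = 0 := by
    intro p hp0
    have hplt : p.1.1 < p.1.2 := p.2
    have hp2 : p.1.2 ≠ 0 := by
      intro h; rw [h] at hplt; exact absurd hplt (Fin.not_lt_zero _)
    have hl : (p.1.2.pred hp2).succ = p.1.2 := Fin.succ_pred _ _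
    have hsum := hS' (p.1.2.pred hp2) (p.1.2.pred hp2)
    simp only [hl] at hsum
    rw [Finset.sum_eq_single p] at hsum
    · simp only [if_neg (ne_of_lt hplt), if_pos rfl] at hsum
      norm_num at hsum
      linarith
    · intro q _ hqp
      by_cases hq0 : q.1.1 = 0
      · by_cases hb' : q.1.2 = p.1.2
        · exact absurd (Subtype.ext (Prod.ext (hq0.trans hp0.symm) hb')) hqp
        · have hq1 : ¬ q.1.1 = p.1.2 := fun h => hp2 (hq0.symm.trans h).symm
          simp [if_neg hq1, if_neg hb']
      · rw [h1 q hq0]; ring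
    · intro h; exact absurd (Finset.mem_univ p) h
  funext p
  by_cases h : p.1.1 = 0
  · exact h2 p h
  · exact h1 p h

open Matrix MeasureTheory

set_option maxHeartbeats 1000000

/-- For a nondegenerate `d`-simplex `S` with edge vectors
`e_p`, the matrix `M` with entries `M_{pq} = ⟨e_p, e_q⟩²` is symmetric positive
definite, the system `Mα = b` with `b_p = |S|·‖e_p‖²` has a unique solution,
and every coefficient vector `α` satisfying `|S|·I = Σ_p α_p e_p e_pᵀ`
solves `Mα = b`. -/
theorem stmt_16 (d : ℕ) (x : Fin (d + 1) → (Fin d → ℝ))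
    (hx : AffineIndependent ℝ x)
    (e : {p : Fin (d + 1) × Fin (d + 1) // p.1 < p.2} → (Fin d → ℝ))
    (he : ∀ p, e p = x p.1.1 - x p.1.2)
    (M : Matrix {p : Fin (d + 1) × Fin (d + 1) // p.1 < p.2}
                {p : Fin (d + 1) × Fin (d + 1) // p.1 < p.2} ℝ)
    (hM : ∀ p q, M p q = (∑ k, e p k * e q k) ^ 2)
    (b : {p : Fin (d + 1) × Fin (d + 1) // p.1 < p.2} → ℝ)
    (hb : ∀ p, b p
      = (volume (convexHull ℝ (Set.range x))).toReal * ∑ k, e p k ^ 2) :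
    M.PosDef ∧
    (∃! α : {p : Fin (d + 1) × Fin (d + 1) // p.1 < p.2} → ℝ, M.mulVec α = b) ∧
    (∀ α : {p : Fin (d + 1) × Fin (d + 1) // p.1 < p.2} → ℝ,
      (volume (convexHull ℝ (Set.range x))).toReal • (1 : Matrix (Fin d) (Fin d) ℝ)
          = ∑ p, α p • Matrix.vecMulVec (e p) (e p) →
       M.mulVec α = b) := by
  have hMsymm : ∀ p q, M p q = M q p := fun p q => by
    rw [hM, hM]
    congr 1
    exact Finset.sum_congr rfl fun k _ => mul_comm _ _
  have herm : M.IsHermitian := by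
    ext p q
    simp only [Matrix.conjTranspose_apply, star_trivial]
    exact hMsymm q p
  -- quadratic form identity
  have qid : ∀ v : {p : Fin (d + 1) × Fin (d + 1) // p.1 < p.2} → ℝ,
      v ⬝ᵥ M.mulVec v = ∑ k, ∑ l, (∑ p, v p * e p k * e p l) ^ 2 := by
    intro v
    have lhs1 : v ⬝ᵥ M.mulVec v
        = ∑ p, ∑ q, ∑ k, ∑ l, (v p * e p k * e p l) * (v q * e q k * e q l) := by
      simp only [dotProduct, Matrix.mulVec, Finset.mul_sum]
      refine Finset.sum_congr rfl fun p _ => Finset.sum_congr rfl fun q _ => ?_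
      simp only [hM, pow_two, Finset.sum_mul_sum, Finset.sum_mul, Finset.mul_sum]
      exact Finset.sum_congr rfl fun k _ => Finset.sum_congr rfl fun l _ => by ring
    have rhs1 : ∑ k, ∑ l, (∑ p, v p * e p k * e p l) ^ 2
        = ∑ k, ∑ l, ∑ p, ∑ q, (v p * e p k * e p l) * (v q * e q k * e q l) := by
      refine Finset.sum_congr rfl fun k _ => Finset.sum_congr rfl fun l _ => ?_
      rw [pow_two, Finset.sum_mul_sum]
    rw [lhs1, rhs1]
    calc ∑ p, ∑ q, ∑ k, ∑ l, (v p * e p k * e p l) * (v q * e q k * e q l)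
        = ∑ p, ∑ k, ∑ q, ∑ l, (v p * e p k * e p l) * (v q * e q k * e q l) :=
          Finset.sum_congr rfl fun p _ => Finset.sum_comm
      _ = ∑ k, ∑ p, ∑ q, ∑ l, (v p * e p k * e p l) * (v q * e q k * e q l) :=
          Finset.sum_comm
      _ = ∑ k, ∑ p, ∑ l, ∑ q, (v p * e p k * e p l) * (v q * e q k * e q l) :=
          Finset.sum_congr rfl fun k _ => Finset.sum_congr rfl fun p _ => Finset.sum_comm
      _ = ∑ k, ∑ l, ∑ p, ∑ q, (v p * e p k * e p l) * (v q * e q k * e q l) :=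
          Finset.sum_congr rfl fun k _ => Finset.sum_comm
  have hPD : M.PosDef := by
    refine Matrix.PosDef.of_dotProduct_mulVec_pos herm fun v hv => ?_
    have hsv : star v = v := funext fun p => star_trivial _
    rw [hsv]
    rw [qid v]
    have hnz : ¬ ∀ k l, ∑ p, v p * e p k * e p l = 0 := fun hall =>
      hv (key_li x hx e he v hall)
    push_neg at hnz
    obtain ⟨k0, l0, hkl⟩ := hnz
    refine Finset.sum_pos' (fun k _ => Finset.sum_nonneg fun l _ => sq_nonneg _)
      ⟨k0, Finset.mem_univ _, Finset.sum_pos' (fun l _ => sq_nonneg _)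
        ⟨l0, Finset.mem_univ _, by positivity⟩⟩
  refine ⟨hPD, ?_, ?_⟩
  · -- unique solvability
    have hu : IsUnit M := hPD.isUnit
    have hinj := Matrix.mulVec_injective_iff_isUnit.mpr hu
    haveI := hu.invertible
    have hsol : M.mulVec (M⁻¹.mulVec b) = b := by
      rw [Matrix.mulVec_mulVec, Matrix.mul_inv_of_invertible, Matrix.one_mulVec]
    exact ⟨M⁻¹.mulVec b, hsol, fun y hy => hinj (hy.trans hsol.symm)⟩
  · -- every α with the identity solves Mα = b
    intro α hid
    set V := (volume (convexHull ℝ (Set.range x))).toReal with hV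
    have hent : ∀ k l, (∑ q, α q * (e q k * e q l)) = V * (if k = l then 1 else 0) := by
      intro k l
      have h1 := congrFun (congrFun hid k) l
      simp only [Matrix.smul_apply, Matrix.one_apply, Matrix.sum_apply,
        Pi.smul_apply, Matrix.vecMulVec_apply, smul_eq_mul] at h1
      rw [← h1]
    funext p
    have step1 : M.mulVec α p = ∑ q, ∑ k, ∑ l, (e p k * e p l) * (α q * (e q k * e q l)) := by
      simp only [Matrix.mulVec, dotProduct]
      refine Finset.sum_congr rfl fun q _ => ?_
      simp only [hM, pow_two, Finset.sum_mul_sum, Finset.sum_mul, Finset.mul_sum]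
      exact Finset.sum_congr rfl fun k _ => Finset.sum_congr rfl fun l _ => by ring
    rw [step1]
    calc ∑ q, ∑ k, ∑ l, (e p k * e p l) * (α q * (e q k * e q l))
        = ∑ k, ∑ q, ∑ l, (e p k * e p l) * (α q * (e q k * e q l)) := Finset.sum_comm
      _ = ∑ k, ∑ l, ∑ q, (e p k * e p l) * (α q * (e q k * e q l)) :=
          Finset.sum_congr rfl fun k _ => Finset.sum_comm
      _ = ∑ k, ∑ l, (e p k * e p l) * (V * (if k = l then 1 else 0)) := by
          refine Finset.sum_congr rfl fun k _ => Finset.sum_congr rfl fun l _ => ?_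
          rw [← Finset.mul_sum, hent]
      _ = ∑ k, (e p k * e p k) * V := by
          refine Finset.sum_congr rfl fun k _ => ?_
          rw [Finset.sum_eq_single k]
          · simp
          · intro l _ hlk
            simp [Ne.symm hlk]
          · intro h; exact absurd (Finset.mem_univ k) h
      _ = b p := by
          rw [hb, Finset.mul_sum]
          exact Finset.sum_congr rfl fun k _ => by ring
end
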